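/- Let B be a standard one-dimensional Brownian motion started at 0. Then the reflected process |B_t| has the same law (as a process at each fixed time t, in distribution) as the Skorohod reflection of B on [0,∞): for each t, |B_t| and B_t + sup_{s≤t}(-B_s)⁺ have the same distribution. -/

import Mathlib

open MeasureTheory ProbabilityTheory

namespace LevyAux

/-- Sum of the first `j` coordinates of `x : Fin N → ℝ` (partial sum of the walk). -/
noncomputable def psum (N : ℕ) (j : ℕ) (x : Fin N → ℝ) : ℝ :=
  ∑ i ∈ Finset.range j, (if h : i < N then x ⟨i, h⟩ else 0)

lemma psum_zero (N : ℕ) (x : Fin N → ℝ) : psum N 0 x = 0 := by simp [psum]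

lemma psum_succ (N j : ℕ) (x : Fin N → ℝ) :
    psum N (j + 1) x = psum N j x + (if h : j < N then x ⟨j, h⟩ else 0) := by
  simp [psum, Finset.sum_range_succ]

lemma measurable_psum (N j : ℕ) : Measurable (psum N j) := by
  apply Finset.measurable_sum
  intro i _
  by_cases h : i < N
  · simpa [h] using measurable_pi_apply (⟨i, h⟩ : Fin N)
  · simpa [h] using measurable_const

/-- The reflection map flipping the sign of all coordinates from index `j` on. -/
def flipAt (N j : ℕ) (x : Fin N → ℝ) : Fin N → ℝ :=
  fun i => if (i : ℕ) < j then x i else - x i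

lemma psum_flipAt_of_le (N : ℕ) {k j : ℕ} (hkj : k ≤ j) (x : Fin N → ℝ) :
    psum N k (flipAt N j x) = psum N k x := by
  unfold psum
  refine Finset.sum_congr rfl fun i hi => ?_
  have hik : i < k := Finset.mem_range.mp hi
  by_cases h : i < N
  · simp only [dif_pos h]
    have : ((⟨i, h⟩ : Fin N) : ℕ) < j := lt_of_lt_of_le hik hkj
    simp [flipAt, this]
  · simp [h]

lemma psum_flipAt_top (N j : ℕ) (hj : j ≤ N) (x : Fin N → ℝ) :
    psum N N (flipAt N j x) = 2 * psum N j x - psum N N x := by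
  have key : psum N N (flipAt N j x) + psum N N x = 2 * psum N j x := by
    unfold psum
    rw [← Finset.sum_add_distrib, Finset.mul_sum]
    rw [show (Finset.range N) = Finset.range j ∪ (Finset.range N \ Finset.range j) by
      rw [Finset.union_sdiff_of_subset (Finset.range_subset_range.mpr hj)]]
    rw [Finset.sum_union (Finset.disjoint_sdiff)]
    have h1 : ∀ i ∈ Finset.range j,
        (if h : i < N then flipAt N j x ⟨i, h⟩ else 0) + (if h : i < N then x ⟨i, h⟩ else 0)
          = 2 * (if h : i < N then x ⟨i, h⟩ else 0) := by
      intro i hi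
      have hij : i < j := Finset.mem_range.mp hi
      by_cases h : i < N
      · simp only [dif_pos h]
        have : ((⟨i, h⟩ : Fin N) : ℕ) < j := hij
        simp [flipAt, this]; ring
      · simp [h]
    have h2 : ∀ i ∈ Finset.range N \ Finset.range j,
        (if h : i < N then flipAt N j x ⟨i, h⟩ else 0) + (if h : i < N then x ⟨i, h⟩ else 0)
          = 2 * (0 : ℝ) := by
      intro i hi
      rcases Finset.mem_sdiff.mp hi with ⟨hiN, hij⟩
      have h : i < N := Finset.mem_range.mp hiN
      have hij' : ¬ (i < j) := fun hc => hij (Finset.mem_range.mpr hc)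
      simp only [dif_pos h]
      have : ¬ ((⟨i, h⟩ : Fin N) : ℕ) < j := hij'
      simp [flipAt, this]
    rw [Finset.sum_congr rfl h1, Finset.sum_congr rfl h2]
    simp [Finset.mul_sum]
  linarith [key]

/-- Coordinate reversal. -/
def revMap (N : ℕ) (x : Fin N → ℝ) : Fin N → ℝ := fun i => x i.rev

lemma psum_revMap (N : ℕ) : ∀ j ≤ N, ∀ x : Fin N → ℝ,
    psum N (N - j) x + psum N j (revMap N x) = psum N N x := by
  intro j
  induction j with
  | zero => intro _ x; simp [psum_zero]
  | succ j ih =>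
    intro hj x
    have hjN : j < N := hj
    have hrec := ih (le_of_lt hjN) x
    have hNj : N - j = (N - (j+1)) + 1 := by omega
    have hlt : N - (j + 1) < N := by omega
    have e1 : psum N (N - j) x = psum N (N - (j+1)) x + x ⟨N - (j+1), hlt⟩ := by
      rw [hNj, psum_succ]
      simp [hlt]
    have e2 : psum N (j+1) (revMap N x) = psum N j (revMap N x) + x ⟨N - (j+1), hlt⟩ := by
      rw [psum_succ]
      have hfin : Fin.rev ⟨j, hjN⟩ = (⟨N - (j+1), hlt⟩ : Fin N) := by
        rw [Fin.ext_iff, Fin.val_rev]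
      have hrev : revMap N x ⟨j, hjN⟩ = x ⟨N - (j+1), hlt⟩ := by
        show x (Fin.rev ⟨j, hjN⟩) = _
        rw [hfin]
      simp [hjN, hrev]
    rw [e2]
    rw [e1] at hrec
    linarith [hrec]

end LevyAux

namespace LevyAux

section DiscreteMeasure

variable {N : ℕ} {ν : Measure ℝ} [IsProbabilityMeasure ν]

lemma measurePreserving_flipAt (N j : ℕ) (hsymm : ν.map (fun x => -x) = ν) :
    MeasurePreserving (flipAt N j) (Measure.pi fun _ : Fin N => ν)
      (Measure.pi fun _ : Fin N => ν) := by
  have h : flipAt N j =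
      fun x (i : Fin N) => (fun (i : Fin N) (y : ℝ) => if (i : ℕ) < j then y else -y) i (x i) := by
    funext x i
    rfl
  rw [h]
  refine measurePreserving_pi (f := fun (i : Fin N) (y : ℝ) => if (i : ℕ) < j then y else -y) (fun _ : Fin N => ν) (fun _ : Fin N => ν) fun i => ?_
  by_cases hi : (i : ℕ) < j
  · simp only [if_pos hi]
    exact MeasurePreserving.id ν
  · simp only [if_neg hi]
    exact ⟨measurable_neg, hsymm⟩

lemma measurePreserving_revMap (N : ℕ) :
    MeasurePreserving (revMap N) (Measure.pi fun _ : Fin N => ν)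
      (Measure.pi fun _ : Fin N => ν) := by
  have h := measurePreserving_arrowCongr' (fun _ : Fin N => ν) (fun _ : Fin N => ν)
    (Fin.revPerm : Fin N ≃ Fin N) (MeasurableEquiv.refl ℝ) (fun _ => MeasurePreserving.id ν)
  have heq : ⇑(MeasurableEquiv.arrowCongr' (Fin.revPerm : Fin N ≃ Fin N)
      (MeasurableEquiv.refl ℝ)) = revMap N := by
    funext x i
    simp [MeasurableEquiv.arrowCongr', Equiv.arrowCongr', Equiv.arrowCongr, revMap]
  rwa [heq] at h

/-- The első-hitting decomposition set: first index where the walk reaches level `c` is `j`. -/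
def hitSet (N : ℕ) (c : ℝ) (j : ℕ) : Set (Fin N → ℝ) :=
  {x | c ≤ psum N j x ∧ ∀ k < j, psum N k x < c}

lemma measurableSet_hitSet (N : ℕ) (c : ℝ) (j : ℕ) : MeasurableSet (hitSet N c j) := by
  have h : hitSet N c j
      = {x | c ≤ psum N j x} ∩ ⋂ (k : ℕ) (_ : k < j), {x | psum N k x < c} := by
    ext x
    simp [hitSet]
  rw [h]
  exact (measurableSet_le measurable_const (measurable_psum N j)).inter
    (MeasurableSet.biInter (Set.to_countable _)
      fun k _ => measurableSet_lt (measurable_psum N k) measurable_const)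

lemma union_hitSet (N : ℕ) (c : ℝ) :
    {x : Fin N → ℝ | ∃ j, j ≤ N ∧ c ≤ psum N j x}
      = ⋃ j ∈ Finset.range (N + 1), hitSet N c j := by
  ext x
  simp only [Set.mem_setOf_eq, Set.mem_iUnion, Finset.mem_range, exists_prop]
  constructor
  · rintro ⟨j, hj, hc⟩
    have hex : ∃ m, c ≤ psum N m x := ⟨j, hc⟩
    refine ⟨Nat.find hex, ?_, Nat.find_spec hex, fun k hk => ?_⟩
    · have := Nat.find_min' hex hc
      omega
    · exact not_le.mp (Nat.find_min hex hk)
  · rintro ⟨j, hj, hcj, _⟩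
    exact ⟨j, by omega, hcj⟩

lemma disjoint_hitSet (N : ℕ) (c : ℝ) {j k : ℕ} (h : j ≠ k) :
    Disjoint (hitSet N c j) (hitSet N c k) := by
  rcases h.lt_or_gt with h' | h'
  · refine Set.disjoint_left.mpr fun x hx hx' => ?_
    exact absurd hx.1 (not_le.mpr (hx'.2 j h'))
  · refine Set.disjoint_left.mpr fun x hx hx' => ?_
    exact absurd hx'.1 (not_le.mpr (hx.2 k h'))

lemma measure_hitSet_flip (hsymm : ν.map (fun x => -x) = ν) {j : ℕ} (hj : j ≤ N) (c : ℝ) :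
    (Measure.pi fun _ : Fin N => ν) (hitSet N c j ∩ {x | 2 * psum N j x - psum N N x < c})
      = (Measure.pi fun _ : Fin N => ν) (hitSet N c j ∩ {x | psum N N x < c}) := by
  have hmp := measurePreserving_flipAt (ν := ν) N j hsymm
  have hA : MeasurableSet (hitSet N c j ∩ {x | psum N N x < c}) :=
    (measurableSet_hitSet N c j).inter
      (measurableSet_lt (measurable_psum N N) measurable_const)
  have hpre : flipAt N j ⁻¹' (hitSet N c j ∩ {x | psum N N x < c})
      = hitSet N c j ∩ {x | 2 * psum N j x - psum N N x < c} := by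
    ext x
    simp only [Set.mem_preimage, Set.mem_inter_iff, Set.mem_setOf_eq, hitSet]
    rw [psum_flipAt_of_le N le_rfl x, psum_flipAt_top N j hj x]
    constructor
    · rintro ⟨⟨h1, h2⟩, h3⟩
      refine ⟨⟨h1, fun k hk => ?_⟩, h3⟩
      rw [← psum_flipAt_of_le N (le_of_lt hk) x]
      exact h2 k hk
    · rintro ⟨⟨h1, h2⟩, h3⟩
      refine ⟨⟨h1, fun k hk => ?_⟩, h3⟩
      rw [psum_flipAt_of_le N (le_of_lt hk) x]
      exact h2 k hk
  rw [← hpre]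
  exact hmp.measure_preimage hA.nullMeasurableSet

end DiscreteMeasure

end LevyAux

namespace LevyAux

section DiscreteCore

variable {N : ℕ} {ν : Measure ℝ} [IsProbabilityMeasure ν]

lemma measure_union_hitSet_eq (c : ℝ) :
    (Measure.pi fun _ : Fin N => ν) {x | ∃ j, j ≤ N ∧ c ≤ psum N j x}
      = ∑ j ∈ Finset.range (N + 1), (Measure.pi fun _ : Fin N => ν) (hitSet N c j) := by
  rw [union_hitSet N c]
  exact measure_biUnion_finset
    (fun j _ k _ hjk => disjoint_hitSet N c hjk) (fun j _ => measurableSet_hitSet N c j)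

/-- Decomposition: `μ {max hit} = μ {S_N ≥ c} + ∑_j μ (E_j ∩ {S_N < c})`. -/
lemma measure_hit_decomp (c : ℝ) :
    (Measure.pi fun _ : Fin N => ν) {x | ∃ j, j ≤ N ∧ c ≤ psum N j x}
      = (Measure.pi fun _ : Fin N => ν) {x | c ≤ psum N N x}
        + ∑ j ∈ Finset.range (N + 1),
            (Measure.pi fun _ : Fin N => ν) (hitSet N c j ∩ {x | psum N N x < c}) := by
  set μ := (Measure.pi fun _ : Fin N => ν) with hμ
  have hFm : MeasurableSet {x : Fin N → ℝ | c ≤ psum N N x} :=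
    measurableSet_le measurable_const (measurable_psum N N)
  have hsplit : ∀ j, μ (hitSet N c j)
      = μ (hitSet N c j ∩ {x | c ≤ psum N N x}) + μ (hitSet N c j ∩ {x | psum N N x < c}) := by
    intro j
    have h1 := measure_inter_add_diff (μ := μ) (hitSet N c j) hFm
    have h2 : hitSet N c j \ {x | c ≤ psum N N x} = hitSet N c j ∩ {x | psum N N x < c} := by
      ext x
      simp [Set.mem_diff, not_le]
    rw [h2] at h1
    exact h1.symm
  rw [measure_union_hitSet_eq c]
  rw [Finset.sum_congr rfl fun j _ => hsplit j, Finset.sum_add_distrib]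
  congr 1
  have hsum : ∑ j ∈ Finset.range (N + 1), μ (hitSet N c j ∩ {x | c ≤ psum N N x})
      = μ (⋃ j ∈ Finset.range (N + 1), hitSet N c j ∩ {x | c ≤ psum N N x}) := by
    refine (measure_biUnion_finset ?_ fun j _ => (measurableSet_hitSet N c j).inter hFm).symm
    exact fun j _ k _ hjk => (disjoint_hitSet N c hjk).mono Set.inter_subset_left
      Set.inter_subset_left
  rw [hsum]
  congr 1
  ext x
  simp only [Set.mem_iUnion, Finset.mem_range, Set.mem_inter_iff, Set.mem_setOf_eq, exists_prop]
  constructor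
  · rintro ⟨j, _, _, h⟩
    exact h
  · intro h
    have : x ∈ {x : Fin N → ℝ | ∃ j, j ≤ N ∧ c ≤ psum N j x} := ⟨N, le_rfl, h⟩
    rw [union_hitSet N c] at this
    simp only [Set.mem_iUnion, Finset.mem_range, exists_prop] at this
    obtain ⟨j, hj, hmem⟩ := this
    exact ⟨j, hj, hmem, h⟩

lemma discrete_upper (hsymm : ν.map (fun x => -x) = ν) (c : ℝ) :
    (Measure.pi fun _ : Fin N => ν) {x | ∃ j, j ≤ N ∧ c ≤ psum N j x}
      ≤ (Measure.pi fun _ : Fin N => ν) {x | c ≤ psum N N x}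
        + (Measure.pi fun _ : Fin N => ν) {x | c < psum N N x} := by
  set μ := (Measure.pi fun _ : Fin N => ν) with hμ
  rw [measure_hit_decomp c]
  gcongr
  have hstep : ∀ j ∈ Finset.range (N + 1),
      μ (hitSet N c j ∩ {x | psum N N x < c})
        ≤ μ (hitSet N c j ∩ {x | c < psum N N x}) := by
    intro j hj
    have hjN : j ≤ N := by simpa using Nat.lt_succ_iff.mp (Finset.mem_range.mp hj)
    rw [← measure_hitSet_flip hsymm hjN c]
    refine measure_mono fun x hx => ?_
    rcases hx with ⟨hx1, hx2⟩
    refine ⟨hx1, ?_⟩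
    have hc : c ≤ psum N j x := hx1.1
    simp only [Set.mem_setOf_eq] at hx2 ⊢
    linarith
  calc ∑ j ∈ Finset.range (N + 1), μ (hitSet N c j ∩ {x | psum N N x < c})
      ≤ ∑ j ∈ Finset.range (N + 1), μ (hitSet N c j ∩ {x | c < psum N N x}) :=
        Finset.sum_le_sum hstep
    _ = μ (⋃ j ∈ Finset.range (N + 1), hitSet N c j ∩ {x | c < psum N N x}) := by
        refine (measure_biUnion_finset ?_ fun j _ => (measurableSet_hitSet N c j).inter
          (measurableSet_lt measurable_const (measurable_psum N N))).symm
        exact fun j _ k _ hjk => (disjoint_hitSet N c hjk).mono Set.inter_subset_left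
          Set.inter_subset_left
    _ ≤ μ {x | c < psum N N x} := by
        refine measure_mono ?_
        simp only [Set.iUnion_subset_iff]
        intro j _
        exact Set.inter_subset_right

lemma discrete_lower (hsymm : ν.map (fun x => -x) = ν) {c ε : ℝ} (hc : 0 < c) (hε : 0 ≤ ε) :
    (Measure.pi fun _ : Fin N => ν) {x | c ≤ psum N N x}
      + (Measure.pi fun _ : Fin N => ν) {x | c + 2 * ε < psum N N x}
      ≤ (Measure.pi fun _ : Fin N => ν) {x | ∃ j, j ≤ N ∧ c ≤ psum N j x}
        + (Measure.pi fun _ : Fin N => ν) {x | ∃ i : Fin N, ε < |x i|} := by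
  classical
  set μ := (Measure.pi fun _ : Fin N => ν) with hμ
  set G : Set (Fin N → ℝ) := {x | (∀ i, |x i| ≤ ε) ∧ c + 2 * ε < psum N N x} with hG
  have hGm : MeasurableSet G := by
    refine MeasurableSet.inter ?_ (measurableSet_lt measurable_const (measurable_psum N N))
    show MeasurableSet {x : Fin N → ℝ | ∀ i, |x i| ≤ ε}
    have : {x : Fin N → ℝ | ∀ i, |x i| ≤ ε} = ⋂ i, {x | |x i| ≤ ε} := by
      ext x; simp
    rw [this]
    exact MeasurableSet.iInter fun i =>
      measurableSet_le ((measurable_pi_apply i).abs) measurable_const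
  -- each E_j ∩ G is contained in E_j ∩ {2 S_j - S_N < c}
  have hkey : ∀ j ∈ Finset.range (N + 1),
      μ (hitSet N c j ∩ G) ≤ μ (hitSet N c j ∩ {x | psum N N x < c}) := by
    intro j hj
    have hjN : j ≤ N := Nat.lt_succ_iff.mp (Finset.mem_range.mp hj)
    rw [← measure_hitSet_flip hsymm hjN c]
    refine measure_mono fun x hx => ?_
    rcases hx with ⟨hx1, hxG⟩
    refine ⟨hx1, ?_⟩
    simp only [Set.mem_setOf_eq]
    rcases hxG with ⟨hosc, hSN⟩
    -- j ≥ 1 since c > 0 and psum N 0 x = 0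
    rcases Nat.eq_zero_or_pos j with hj0 | hjpos
    · exfalso
      have := hx1.1
      rw [hj0, psum_zero] at this
      linarith
    · obtain ⟨j', rfl⟩ := Nat.exists_eq_add_of_lt hjpos
      rw [zero_add] at *
      have hj'N : j' < N := by omega
      have hprev : psum N j' x < c := hx1.2 j' (Nat.lt_succ_self j')
      have hstep : psum N (j' + 1) x = psum N j' x + x ⟨j', hj'N⟩ := by
        rw [psum_succ]
        simp [hj'N]
      have hxb : x ⟨j', hj'N⟩ ≤ ε := le_trans (le_abs_self _) (hosc _)
      have hSj : psum N (j' + 1) x < c + ε := by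
        rw [hstep]; linarith
      linarith
  have hGsub : G ⊆ {x | ∃ j, j ≤ N ∧ c ≤ psum N j x} := by
    intro x hx
    exact ⟨N, le_rfl, by nlinarith [hx.2]⟩
  have hGsum : μ G ≤ ∑ j ∈ Finset.range (N + 1), μ (hitSet N c j ∩ G) := by
    have : G = ⋃ j ∈ Finset.range (N + 1), hitSet N c j ∩ G := by
      have := union_hitSet N c
      ext x
      constructor
      · intro hx
        have hx' := hGsub hx
        rw [union_hitSet N c] at hx'
        simp only [Set.mem_iUnion, Finset.mem_range, exists_prop] at hx' ⊢
        obtain ⟨j, hj, hmem⟩ := hx'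
        exact ⟨j, hj, hmem, hx⟩
      · intro hx
        simp only [Set.mem_iUnion, Finset.mem_range, exists_prop] at hx
        obtain ⟨j, hj, _, hxG⟩ := hx
        exact hxG
    refine le_of_eq ?_
    conv_lhs => rw [this]
    exact measure_biUnion_finset
      (fun j _ k _ hjk => (disjoint_hitSet N c hjk).mono Set.inter_subset_left
        Set.inter_subset_left)
      (fun j _ => (measurableSet_hitSet N c j).inter hGm)
  have hOsc : μ {x | c + 2 * ε < psum N N x} ≤ μ G + μ {x | ∃ i : Fin N, ε < |x i|} := by
    have hsub : {x : Fin N → ℝ | c + 2 * ε < psum N N x}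
        ⊆ G ∪ {x | ∃ i : Fin N, ε < |x i|} := by
      intro x hx
      by_cases hosc : ∀ i, |x i| ≤ ε
      · exact Or.inl ⟨hosc, hx⟩
      · right
        push_neg at hosc
        obtain ⟨i, hi⟩ := hosc
        exact ⟨i, hi⟩
    exact le_trans (measure_mono hsub) (measure_union_le _ _)
  calc μ {x | c ≤ psum N N x} + μ {x | c + 2 * ε < psum N N x}
      ≤ μ {x | c ≤ psum N N x} + (μ G + μ {x | ∃ i : Fin N, ε < |x i|}) := by gcongr
    _ ≤ (μ {x | c ≤ psum N N x}
          + ∑ j ∈ Finset.range (N + 1), μ (hitSet N c j ∩ {x | psum N N x < c}))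
          + μ {x | ∃ i : Fin N, ε < |x i|} := by
        have h1 : μ G ≤ ∑ j ∈ Finset.range (N + 1), μ (hitSet N c j ∩ {x | psum N N x < c}) :=
          le_trans hGsum (Finset.sum_le_sum hkey)
        calc μ {x | c ≤ psum N N x} + (μ G + μ {x | ∃ i : Fin N, ε < |x i|})
            = (μ {x | c ≤ psum N N x} + μ G) + μ {x | ∃ i : Fin N, ε < |x i|} := by ring
          _ ≤ _ := by gcongr
    _ = μ {x | ∃ j, j ≤ N ∧ c ≤ psum N j x} + μ {x | ∃ i : Fin N, ε < |x i|} := by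
        rw [← measure_hit_decomp c]

lemma discrete_rev (c : ℝ) :
    (Measure.pi fun _ : Fin N => ν) {x | ∃ j, j ≤ N ∧ c < psum N N x - psum N j x}
      = (Measure.pi fun _ : Fin N => ν) {x | ∃ j, j ≤ N ∧ c < psum N j x} := by
  have hmp := measurePreserving_revMap (ν := ν) N
  have hmA : MeasurableSet {x : Fin N → ℝ | ∃ j, j ≤ N ∧ c < psum N j x} := by
    have : {x : Fin N → ℝ | ∃ j, j ≤ N ∧ c < psum N j x}
        = ⋃ (j : ℕ) (_ : j ≤ N), {x | c < psum N j x} := by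
      ext x; simp
    rw [this]
    exact MeasurableSet.biUnion (Set.to_countable _)
      fun j _ => measurableSet_lt measurable_const (measurable_psum N j)
  have hpre : revMap N ⁻¹' {x | ∃ j, j ≤ N ∧ c < psum N j x}
      = {x | ∃ j, j ≤ N ∧ c < psum N N x - psum N j x} := by
    ext x
    simp only [Set.mem_preimage, Set.mem_setOf_eq]
    constructor
    · rintro ⟨j, hj, hcj⟩
      refine ⟨N - j, Nat.sub_le N j, ?_⟩
      have := psum_revMap N j hj x
      linarith
    · rintro ⟨j, hj, hcj⟩
      refine ⟨N - j, Nat.sub_le N j, ?_⟩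
      have h1 := psum_revMap N (N - j) (Nat.sub_le N j) x
      have h2 : N - (N - j) = j := by omega
      rw [h2] at h1
      linarith
  rw [← hpre]
  exact hmp.measure_preimage hmA.nullMeasurableSet

end DiscreteCore

end LevyAux

namespace LevyAux

/-- Running maximum of `g 0, …, g k`. -/
noncomputable def partMax (g : ℕ → ℝ) : ℕ → ℝ
  | 0 => g 0
  | (k + 1) => max (partMax g k) (g (k + 1))

lemma le_partMax (g : ℕ → ℝ) {j k : ℕ} (hjk : j ≤ k) : g j ≤ partMax g k := by
  induction k with
  | zero =>
    have : j = 0 := Nat.le_zero.mp hjk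
    simp [this, partMax]
  | succ k ih =>
    rcases Nat.lt_succ_iff_lt_or_eq.mp (Nat.lt_succ_of_le hjk) with h | h
    · exact le_trans (ih (Nat.lt_succ_iff.mp h)) (le_max_left _ _)
    · subst h
      exact le_max_right _ _

lemma partMax_exists (g : ℕ → ℝ) (k : ℕ) : ∃ j ≤ k, partMax g k = g j := by
  induction k with
  | zero => exact ⟨0, le_rfl, rfl⟩
  | succ k ih =>
    obtain ⟨j, hj, hje⟩ := ih
    rcases le_or_gt (g (k + 1)) (partMax g k) with h | h
    · refine ⟨j, le_trans hj (Nat.le_succ k), ?_⟩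
      rw [show partMax g (k + 1) = max (partMax g k) (g (k + 1)) from rfl, max_eq_left h, hje]
    · refine ⟨k + 1, le_rfl, ?_⟩
      rw [show partMax g (k + 1) = max (partMax g k) (g (k + 1)) from rfl,
        max_eq_right (le_of_lt h)]

lemma measurable_partMax {Ω : Type*} [MeasurableSpace Ω] (g : ℕ → Ω → ℝ)
    (hg : ∀ j, Measurable (g j)) (k : ℕ) :
    Measurable (fun ω => partMax (fun j => g j ω) k) := by
  induction k with
  | zero => exact hg 0
  | succ k ih => exact Measurable.max ih (hg (k + 1))

/-- The law of the increment vector of a Brownian motion along a uniform grid is the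
product of Gaussians. -/
lemma law_increments {Ω : Type*} [MeasureSpace Ω] [IsProbabilityMeasure (ℙ : Measure Ω)]
    (B : ℝ → Ω → ℝ) (hmeas : ∀ t, Measurable (B t))
    (hlaw : ∀ s t : ℝ, 0 ≤ s → s ≤ t →
      Measure.map (fun ω => B t ω - B s ω) ℙ = gaussianReal 0 (t - s).toNNReal)
    (hindep : ∀ n : ℕ, ∀ t : ℕ → ℝ, Monotone t → 0 ≤ t 0 →
      iIndepFun
        (fun i : Fin n => fun ω => B (t (i + 1)) ω - B (t i) ω) ℙ)
    (N : ℕ) (δ : ℝ) (hδ : 0 ≤ δ) :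
    Measure.map (fun ω (i : Fin N) =>
        B ((((i : ℕ) + 1 : ℕ) : ℝ) * δ) ω - B (((i : ℕ) : ℝ) * δ) ω) ℙ
      = Measure.pi (fun _ : Fin N => gaussianReal 0 δ.toNNReal) := by
  have hmono : Monotone (fun j : ℕ => (j : ℝ) * δ) := fun a b hab => by
    have : (a : ℝ) ≤ (b : ℝ) := Nat.cast_le.mpr hab
    exact mul_le_mul_of_nonneg_right this hδ
  have h00 : (0 : ℝ) ≤ (fun j : ℕ => (j : ℝ) * δ) 0 := by simp
  have hind := hindep N (fun j : ℕ => (j : ℝ) * δ) hmono h00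
  have hXi_meas : ∀ i : Fin N,
      Measurable (fun ω => B ((((i : ℕ) + 1 : ℕ) : ℝ) * δ) ω - B (((i : ℕ) : ℝ) * δ) ω) :=
    fun i => (hmeas _).sub (hmeas _)
  have hXmeas : Measurable (fun ω (i : Fin N) =>
      B ((((i : ℕ) + 1 : ℕ) : ℝ) * δ) ω - B (((i : ℕ) : ℝ) * δ) ω) :=
    measurable_pi_lambda _ fun i => hXi_meas i
  have hmarg : ∀ i : Fin N,
      Measure.map (fun ω => B ((((i : ℕ) + 1 : ℕ) : ℝ) * δ) ω - B (((i : ℕ) : ℝ) * δ) ω) ℙ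
        = gaussianReal 0 δ.toNNReal := by
    intro i
    have h1 : (0 : ℝ) ≤ ((i : ℕ) : ℝ) * δ := mul_nonneg (Nat.cast_nonneg _) hδ
    have h2 : ((i : ℕ) : ℝ) * δ ≤ (((i : ℕ) + 1 : ℕ) : ℝ) * δ := hmono (Nat.le_succ _)
    rw [hlaw _ _ h1 h2]
    congr 1
    have : (((i : ℕ) + 1 : ℕ) : ℝ) * δ - ((i : ℕ) : ℝ) * δ = δ := by
      push_cast
      ring
    rw [this]
  symm
  apply Measure.pi_eq
  intro s hs
  rw [Measure.map_apply hXmeas (MeasurableSet.univ_pi hs)]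
  have hpre : (fun ω (i : Fin N) =>
        B ((((i : ℕ) + 1 : ℕ) : ℝ) * δ) ω - B (((i : ℕ) : ℝ) * δ) ω) ⁻¹' Set.univ.pi s
      = ⋂ i ∈ (Finset.univ : Finset (Fin N)), (fun ω =>
          B ((((i : ℕ) + 1 : ℕ) : ℝ) * δ) ω - B (((i : ℕ) : ℝ) * δ) ω) ⁻¹' s i := by
    ext ω
    simp [Set.mem_univ_pi]
  rw [hpre, hind.measure_inter_preimage_eq_mul Finset.univ (fun i _ => hs i)]
  refine Finset.prod_congr rfl fun i _ => ?_
  rw [← hmarg i, Measure.map_apply (hXi_meas i) (hs i)]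

/-- symmetry of the centered Gaussian -/
lemma gaussianReal_symm (v : NNReal) :
    (gaussianReal 0 v).map (fun x : ℝ => -x) = gaussianReal 0 v := by
  have h := gaussianReal_map_const_mul (μ := 0) (v := v) (-1)
  have h1 : (fun x : ℝ => (-1) * x) = fun x : ℝ => -x := by funext x; ring
  rw [h1] at h
  rw [h]
  congr 1
  · ring
  · ext
    simp

lemma gaussianReal_singleton {v : NNReal} (hv : v ≠ 0) (c : ℝ) :
    gaussianReal 0 v {c} = 0 :=
  gaussianReal_absolutelyContinuous 0 hv (by simp)

end LevyAux

namespace LevyAux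

open Filter

lemma osc_tendsto_zero {Ω : Type*} [MeasureSpace Ω] [IsProbabilityMeasure (ℙ : Measure Ω)]
    (B : ℝ → Ω → ℝ) (hcont : ∀ ω, Continuous fun s => B s ω) (hmeas : ∀ r, Measurable (B r))
    {t : ℝ} (htpos : 0 < t) {ε : ℝ} (hε : 0 < ε) :
    Tendsto (fun n : ℕ => ℙ {ω : Ω | ∃ i : Fin (2^n),
        ε < |B ((((i : ℕ) + 1 : ℕ) : ℝ) * (t / 2^n)) ω - B (((i : ℕ) : ℝ) * (t / 2^n)) ω|})
      atTop (nhds 0) := by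
  set A : ℕ → Set Ω := fun n => {ω : Ω | ∃ i : Fin (2^n),
      ε < |B ((((i : ℕ) + 1 : ℕ) : ℝ) * (t / 2^n)) ω - B (((i : ℕ) : ℝ) * (t / 2^n)) ω|} with hA
  have hAmeas : ∀ n, MeasurableSet (A n) := by
    intro n
    have : A n = ⋃ i : Fin (2^n),
        {ω : Ω | ε < |B ((((i : ℕ) + 1 : ℕ) : ℝ) * (t / 2^n)) ω
          - B (((i : ℕ) : ℝ) * (t / 2^n)) ω|} := by
      ext ω; simp [hA]
    rw [this]
    exact MeasurableSet.iUnion fun i =>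
      measurableSet_lt measurable_const (((hmeas _).sub (hmeas _)).abs)
  have hmesh : Tendsto (fun n : ℕ => t / 2^n) atTop (nhds 0) := by
    have h1 : Tendsto (fun n : ℕ => ((1:ℝ)/2)^n) atTop (nhds 0) :=
      tendsto_pow_atTop_nhds_zero_of_lt_one (by norm_num) (by norm_num)
    have h2 : (fun n : ℕ => t / 2^n) = fun n : ℕ => t * ((1:ℝ)/2)^n := by
      funext n
      rw [div_pow, one_pow]
      ring
    rw [h2]
    simpa using h1.const_mul t
  have hev : ∀ ω, ∀ᶠ n in (atTop : Filter ℕ), ω ∉ A n := by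
    intro ω
    have huc := isCompact_Icc.uniformContinuousOn_of_continuous
      (s := Set.Icc (0:ℝ) t) (hcont ω).continuousOn
    obtain ⟨δ, hδpos, hδ⟩ := Metric.uniformContinuousOn_iff.mp huc ε hε
    have hevmesh : ∀ᶠ n in (atTop : Filter ℕ), t / 2^n < δ :=
      hmesh.eventually_lt_const hδpos
    filter_upwards [hevmesh] with n hn
    intro hωA
    obtain ⟨i, hi⟩ := hωA
    have hΔpos : 0 < t / 2^n := div_pos htpos (by positivity)
    have hi1 : ((i : ℕ) : ℝ) * (t / 2^n) ∈ Set.Icc (0:ℝ) t := by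
      constructor
      · positivity
      · have hle : ((i : ℕ) : ℝ) ≤ (2^n : ℝ) := by
          have := i.2
          exact_mod_cast le_of_lt (by exact_mod_cast this)
        calc ((i : ℕ) : ℝ) * (t / 2^n) ≤ (2^n : ℝ) * (t / 2^n) :=
              mul_le_mul_of_nonneg_right hle (le_of_lt hΔpos)
          _ = t := by field_simp
    have hi2 : (((i : ℕ) + 1 : ℕ) : ℝ) * (t / 2^n) ∈ Set.Icc (0:ℝ) t := by
      constructor
      · positivity
      · have hle : (((i : ℕ) + 1 : ℕ) : ℝ) ≤ (2^n : ℝ) := by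
          have := i.2
          have h' : (i : ℕ) + 1 ≤ 2^n := this
          exact_mod_cast h'
        calc (((i : ℕ) + 1 : ℕ) : ℝ) * (t / 2^n) ≤ (2^n : ℝ) * (t / 2^n) :=
              mul_le_mul_of_nonneg_right hle (le_of_lt hΔpos)
          _ = t := by field_simp
    have hdist : dist ((((i : ℕ) + 1 : ℕ) : ℝ) * (t / 2^n)) (((i : ℕ) : ℝ) * (t / 2^n)) < δ := by
      rw [Real.dist_eq]
      have : (((i : ℕ) + 1 : ℕ) : ℝ) * (t / 2^n) - ((i : ℕ) : ℝ) * (t / 2^n) = t / 2^n := by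
        push_cast
        ring
      rw [this, abs_of_pos hΔpos]
      exact hn
    have := hδ _ hi2 _ hi1 hdist
    rw [Real.dist_eq] at this
    exact absurd hi (not_lt.mpr (le_of_lt this))
  have hlin : ∀ n, ℙ (A n) = ∫⁻ ω, (A n).indicator (1 : Ω → ENNReal) ω ∂ℙ := by
    intro n
    rw [lintegral_indicator_one (hAmeas n)]
  have htend : Tendsto (fun n => ∫⁻ ω, (A n).indicator (1 : Ω → ENNReal) ω ∂ℙ)
      atTop (nhds (∫⁻ (_ : Ω), (0 : ENNReal) ∂ℙ)) := by
    refine tendsto_lintegral_of_dominated_convergence (fun _ => (1 : ENNReal))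
      (fun n => measurable_const.indicator (hAmeas n)) ?_ ?_ ?_
    · intro n
      filter_upwards with ω
      by_cases h : ω ∈ A n <;> simp [h]
    · simp
    · filter_upwards with ω
      have := hev ω
      have hev0 : ∀ᶠ n in (atTop : Filter ℕ),
          (A n).indicator (1 : Ω → ENNReal) ω = 0 := by
        filter_upwards [this] with n hn
        simp [hn]
      exact Tendsto.congr' (hev0.mono fun n hn => hn.symm) tendsto_const_nhds
  simp only [lintegral_zero] at htend
  exact Tendsto.congr (fun n => (hlin n).symm) htend

end LevyAux


/-- A standard one-dimensional Brownian motion started at `0`: continuous paths,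
`B 0 = 0`, measurable marginals, Gaussian increments with the right variance, and
independent increments. -/
def IsBrownianMotion1d {Ω : Type*} [MeasureSpace Ω] (B : ℝ → Ω → ℝ) : Prop :=
  (∀ ω, Continuous fun t => B t ω) ∧
  (∀ ω, B 0 ω = 0) ∧
  (∀ t, Measurable (B t)) ∧
  (∀ s t : ℝ, 0 ≤ s → s ≤ t →
    Measure.map (fun ω => B t ω - B s ω) ℙ = gaussianReal 0 (t - s).toNNReal) ∧
  (∀ n : ℕ, ∀ t : ℕ → ℝ, Monotone t → 0 ≤ t 0 →
    iIndepFun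
      (fun i : Fin n => fun ω => B (t (i + 1)) ω - B (t i) ω) ℙ)

open Filter LevyAux in
/-- Lévy's theorem, fixed-time distributional version: for a standard
Brownian motion `B` started at `0` and any `t ≥ 0`, the reflected value `|B t|` has the
same distribution as the Skorohod reflection `B t + sup_{s ≤ t} (-B s)⁺`. -/
theorem reflected_BM_eq_skorohod_reflection_in_law
    {Ω : Type*} [MeasureSpace Ω] [IsProbabilityMeasure (ℙ : Measure Ω)]
    (B : ℝ → Ω → ℝ) (hB : IsBrownianMotion1d B) (t : ℝ) (ht : 0 ≤ t) :
    Measure.map (fun ω => |B t ω|) ℙ =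
      Measure.map
        (fun ω => B t ω + sSup ((fun s => max (-B s ω) 0) '' Set.Icc 0 t)) ℙ := by
  obtain ⟨hcont, h0, hmeas, hlaw, hindep⟩ := hB
  rcases eq_or_lt_of_le ht with heq | htpos
  · -- degenerate case t = 0
    have h0t : t = 0 := heq.symm
    subst h0t
    have hf1 : (fun ω => |B 0 ω|) = fun _ => (0:ℝ) := by
      funext ω; rw [h0 ω]; exact abs_zero
    have hf2 : (fun ω => B 0 ω + sSup ((fun s => max (-B s ω) 0) '' Set.Icc 0 0))
        = fun _ => (0:ℝ) := by
      funext ω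
      rw [Set.Icc_self, Set.image_singleton, h0 ω]
      norm_num
    rw [hf1, hf2]
  -- main case 0 < t
  set R : Ω → ℝ := fun ω => B t ω + sSup ((fun s => max (-B s ω) 0) '' Set.Icc 0 t)
    with hRdef
  -- pointwise structure of R via the minimizer of B · ω on [0, t]
  have hmin : ∀ ω, ∃ s₀ ∈ Set.Icc (0:ℝ) t, (∀ s ∈ Set.Icc (0:ℝ) t, B s₀ ω ≤ B s ω)
      ∧ R ω = B t ω - B s₀ ω := by
    intro ω
    obtain ⟨s₀, hs₀, hminon⟩ := isCompact_Icc.exists_isMinOn (Set.nonempty_Icc.mpr ht)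
      (hcont ω).continuousOn
    have hle : ∀ s ∈ Set.Icc (0:ℝ) t, B s₀ ω ≤ B s ω := fun s hs => hminon hs
    have hB0 : B s₀ ω ≤ 0 := by
      have := hle 0 (Set.left_mem_Icc.mpr ht)
      rwa [h0 ω] at this
    have hsup : sSup ((fun s => max (-B s ω) 0) '' Set.Icc 0 t) = -B s₀ ω := by
      apply IsGreatest.csSup_eq
      constructor
      · refine ⟨s₀, hs₀, ?_⟩
        show max (-B s₀ ω) 0 = -B s₀ ω
        exact max_eq_left (by linarith)
      · rintro y ⟨s, hs, rfl⟩
        apply max_le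
        · linarith [hle s hs]
        · linarith
    refine ⟨s₀, hs₀, hle, ?_⟩
    rw [hRdef]
    simp only
    rw [hsup]
    ring
  have hub : ∀ ω, ∀ s ∈ Set.Icc (0:ℝ) t, B t ω - B s ω ≤ R ω := by
    intro ω s hs
    obtain ⟨s₀, _, hle, hval⟩ := hmin ω
    rw [hval]
    linarith [hle s hs]
  have hRnonneg : ∀ ω, 0 ≤ R ω := by
    intro ω
    obtain ⟨s₀, _, hle, hval⟩ := hmin ω
    rw [hval]
    linarith [hle t (Set.right_mem_Icc.mpr ht)]
  have hgt_iff : ∀ (a : ℝ) (ω : Ω), a < R ω ↔ ∃ s ∈ Set.Icc (0:ℝ) t, a < B t ω - B s ω := by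
    intro a ω
    constructor
    · intro h
      obtain ⟨s₀, hs₀, _, hval⟩ := hmin ω
      exact ⟨s₀, hs₀, hval ▸ h⟩
    · rintro ⟨s, hs, h⟩
      exact lt_of_lt_of_le h (hub ω s hs)
  -- grid facts
  have hNpos : ∀ n : ℕ, (0:ℝ) < 2^n := fun n => by positivity
  have hΔpos : ∀ n : ℕ, 0 < t / 2^n := fun n => div_pos htpos (hNpos n)
  have hptop : ∀ n : ℕ, ((2^n : ℕ) : ℝ) * (t / 2^n) = t := by
    intro n
    push_cast
    field_simp
  have hpmem : ∀ n (j : ℕ), j ≤ 2^n → ((j : ℕ):ℝ) * (t / 2^n) ∈ Set.Icc (0:ℝ) t := by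
    intro n j hj
    constructor
    · positivity
    · have hcast : ((j:ℕ):ℝ) ≤ ((2^n : ℕ):ℝ) := Nat.cast_le.mpr hj
      calc ((j:ℕ):ℝ) * (t/2^n) ≤ ((2^n:ℕ):ℝ) * (t/2^n) :=
            mul_le_mul_of_nonneg_right hcast (le_of_lt (hΔpos n))
        _ = t := hptop n
  -- dyadic approximation of the supremum
  have hdyadic : ∀ (a : ℝ) (ω : Ω), a < R ω →
      ∃ n : ℕ, ∃ j : ℕ, j ≤ 2^n ∧ a < B t ω - B ((j:ℝ) * (t/2^n)) ω := by
    intro a ω hR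
    obtain ⟨s, hs, hsval⟩ := (hgt_iff a ω).mp hR
    have hopen : IsOpen {u : ℝ | B u ω < B t ω - a} :=
      (isOpen_Iio (a := B t ω - a)).preimage (hcont ω)
    obtain ⟨δ, hδpos, hball⟩ := Metric.isOpen_iff.mp hopen s
      (by simp only [Set.mem_setOf_eq]; linarith)
    obtain ⟨m, hm⟩ := pow_unbounded_of_one_lt (t/δ) (one_lt_two (α := ℝ))
    have hΔp := hΔpos m
    have hΔδ : t / 2^m < δ := by
      rw [div_lt_iff₀ (hNpos m)]
      rw [div_lt_iff₀ hδpos] at hm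
      linarith [hm]
    set j := ⌊s / (t / 2^m)⌋₊ with hjdef
    have hj1 : (j:ℝ) * (t / 2^m) ≤ s := by
      have hfl : (j:ℝ) ≤ s / (t / 2^m) := Nat.floor_le (div_nonneg hs.1 (le_of_lt hΔp))
      calc (j:ℝ) * (t/2^m) ≤ (s / (t/2^m)) * (t/2^m) :=
            mul_le_mul_of_nonneg_right hfl (le_of_lt hΔp)
        _ = s := by field_simp
    have hj2 : s < ((j:ℝ) + 1) * (t / 2^m) := by
      have hfl := Nat.lt_floor_add_one (s / (t / 2^m))
      calc s = (s / (t/2^m)) * (t/2^m) := by field_simp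
        _ < ((j:ℝ) + 1) * (t/2^m) := mul_lt_mul_of_pos_right hfl hΔp
    have hjle : j ≤ 2^m := by
      have h1 : (j:ℝ) * (t/2^m) ≤ ((2^m:ℕ):ℝ) * (t/2^m) := by
        rw [hptop m]
        exact le_trans hj1 hs.2
      have h2 : (j:ℝ) ≤ ((2^m:ℕ):ℝ) := le_of_mul_le_mul_right h1 hΔp
      exact_mod_cast h2
    refine ⟨m, j, hjle, ?_⟩
    have hmem : (j:ℝ) * (t/2^m) ∈ Metric.ball s δ := by
      rw [Metric.mem_ball, Real.dist_eq, abs_of_nonpos (by linarith)]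
      linarith
    have hBj := hball hmem
    simp only [Set.mem_setOf_eq] at hBj
    linarith
  -- the finite dyadic maxima
  set Rn : ℕ → Ω → ℝ :=
    fun n ω => partMax (fun j => B t ω - B ((j:ℝ) * (t/2^n)) ω) (2^n) with hRndef
  have hRnmeas : ∀ n, Measurable (Rn n) :=
    fun n => measurable_partMax _ (fun j => (hmeas t).sub (hmeas _)) _
  have hRnle : ∀ n ω, Rn n ω ≤ R ω := by
    intro n ω
    obtain ⟨j, hj, hje⟩ := partMax_exists (fun j => B t ω - B ((j:ℝ)*(t/2^n)) ω) (2^n)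
    rw [hRndef]
    simp only
    rw [hje]
    exact hub ω _ (hpmem n j hj)
  have hRnmono : ∀ ω, Monotone fun n => Rn n ω := by
    intro ω
    apply monotone_nat_of_le_succ
    intro n
    obtain ⟨j, hj, hje⟩ := partMax_exists (fun j => B t ω - B ((j:ℝ)*(t/2^n)) ω) (2^n)
    have hpt : (j:ℝ) * (t/2^n) = ((2*j : ℕ):ℝ) * (t/2^(n+1)) := by
      push_cast
      rw [pow_succ]
      field_simp
    have hjle : 2*j ≤ 2^(n+1) := by
      have h2 : 2^(n+1) = 2 * 2^n := by rw [pow_succ]; ring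
      omega
    calc Rn n ω = B t ω - B ((j:ℝ)*(t/2^n)) ω := hje
      _ = B t ω - B (((2*j : ℕ):ℝ)*(t/2^(n+1))) ω := by rw [← hpt]
      _ ≤ Rn (n+1) ω := le_partMax (fun k => B t ω - B ((k:ℝ)*(t/2^(n+1))) ω) hjle
  have hbdd : ∀ ω, BddAbove (Set.range fun n => Rn n ω) := fun ω =>
    ⟨R ω, by rintro y ⟨n, rfl⟩; exact hRnle n ω⟩
  have hRtend : ∀ ω, Tendsto (fun n => Rn n ω) atTop (nhds (R ω)) := by
    intro ω
    have h1 := tendsto_atTop_ciSup (hRnmono ω) (hbdd ω)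
    have h2 : ⨆ n, Rn n ω = R ω := by
      apply le_antisymm
      · exact ciSup_le fun n => hRnle n ω
      · by_contra hcon
        push_neg at hcon
        obtain ⟨m, j, hj, hlt⟩ := hdyadic _ ω hcon
        have hle1 : B t ω - B ((j:ℝ)*(t/2^m)) ω ≤ Rn m ω :=
          le_partMax (fun k => B t ω - B ((k:ℝ)*(t/2^m)) ω) hj
        have hle2 : Rn m ω ≤ ⨆ n, Rn n ω := le_ciSup (hbdd ω) m
        linarith
    rwa [h2] at h1
  have hRmeas : Measurable R :=
    measurable_of_tendsto_metrizable hRnmeas (tendsto_pi_nhds.mpr hRtend)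
  -- laws and the Gaussian measure
  set γ := gaussianReal 0 t.toNNReal with hγdef
  have hvne : t.toNNReal ≠ 0 := by
    rw [ne_eq, Real.toNNReal_eq_zero]
    exact not_le.mpr htpos
  have hBtlaw : Measure.map (B t) ℙ = γ := by
    have hl := hlaw 0 t le_rfl ht
    have hfun : (fun ω => B t ω - B 0 ω) = B t := by
      funext ω
      rw [h0 ω]
      ring
    rw [hfun] at hl
    rw [hl, hγdef]
    norm_num
  have hPBt : ∀ s : Set ℝ, MeasurableSet s → ℙ (B t ⁻¹' s) = γ s := fun s hs => by
    rw [← hBtlaw, Measure.map_apply (hmeas t) hs]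
  have hIciIoi : ∀ c : ℝ, γ (Set.Ici c) = γ (Set.Ioi c) := by
    intro c
    apply le_antisymm
    · have hsub : Set.Ici c ⊆ Set.Ioi c ∪ {c} := by
        intro y hy
        rcases eq_or_lt_of_le (Set.mem_Ici.mp hy) with h | h
        · exact Or.inr (by simp [h.symm])
        · exact Or.inl h
      calc γ (Set.Ici c) ≤ γ (Set.Ioi c ∪ {c}) := measure_mono hsub
        _ ≤ γ (Set.Ioi c) + γ {c} := measure_union_le _ _
        _ = γ (Set.Ioi c) := by
            rw [hγdef, gaussianReal_singleton hvne, add_zero]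
    · exact measure_mono Set.Ioi_subset_Ici_self
  have hsymγ : ∀ c : ℝ, γ (Set.Iio (-c)) = γ (Set.Ioi c) := by
    intro c
    conv_lhs => rw [hγdef, ← gaussianReal_symm t.toNNReal]
    rw [Measure.map_apply measurable_neg measurableSet_Iio]
    rw [hγdef]
    congr 1
    ext y
    simp
  -- transfer to the product Gaussian measure along grids
  have hXmeas : ∀ n, Measurable (fun ω (i : Fin (2^n)) =>
      B ((((i:ℕ)+1 : ℕ):ℝ) * (t/2^n)) ω - B (((i:ℕ):ℝ) * (t/2^n)) ω) :=
    fun n => measurable_pi_lambda _ fun i => (hmeas _).sub (hmeas _)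
  have htrans : ∀ n (A : Set (Fin (2^n) → ℝ)), MeasurableSet A →
      ℙ ((fun ω (i : Fin (2^n)) =>
          B ((((i:ℕ)+1 : ℕ):ℝ) * (t/2^n)) ω - B (((i:ℕ):ℝ) * (t/2^n)) ω) ⁻¹' A)
        = (Measure.pi fun _ : Fin (2^n) => gaussianReal 0 (t/2^n).toNNReal) A := by
    intro n A hA
    rw [← Measure.map_apply (hXmeas n) hA,
      law_increments B hmeas hlaw hindep (2^n) (t/2^n) (le_of_lt (hΔpos n))]
  have htel : ∀ n (ω : Ω) (j : ℕ), j ≤ 2^n →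
      psum (2^n) j (fun i : Fin (2^n) =>
          B ((((i:ℕ)+1 : ℕ):ℝ) * (t/2^n)) ω - B (((i:ℕ):ℝ) * (t/2^n)) ω)
        = B ((j:ℝ) * (t/2^n)) ω := by
    intro n ω j
    induction j with
    | zero =>
      intro _
      rw [psum_zero]
      norm_num
      rw [h0 ω]
    | succ j ih =>
      intro hj
      have hjlt : j < 2^n := hj
      rw [psum_succ, dif_pos hjlt, ih (le_of_lt hjlt)]
      show B ((j:ℝ) * (t/2^n)) ω
          + (B (((j+1 : ℕ):ℝ) * (t/2^n)) ω - B (((j : ℕ):ℝ) * (t/2^n)) ω)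
          = B (((j+1 : ℕ):ℝ) * (t/2^n)) ω
      ring
  have hteltop : ∀ n (ω : Ω),
      psum (2^n) (2^n) (fun i : Fin (2^n) =>
          B ((((i:ℕ)+1 : ℕ):ℝ) * (t/2^n)) ω - B (((i:ℕ):ℝ) * (t/2^n)) ω) = B t ω := by
    intro n ω
    rw [htel n ω (2^n) le_rfl]
    congr 1
    exact_mod_cast hptop n
  have hSNIci : ∀ n (c : ℝ),
      (Measure.pi fun _ : Fin (2^n) => gaussianReal 0 (t/2^n).toNNReal)
        {x | c ≤ psum (2^n) (2^n) x} = γ (Set.Ici c) := by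
    intro n c
    rw [← htrans n _ (measurableSet_le measurable_const (measurable_psum _ _))]
    have hset : (fun ω (i : Fin (2^n)) =>
          B ((((i:ℕ)+1 : ℕ):ℝ) * (t/2^n)) ω - B (((i:ℕ):ℝ) * (t/2^n)) ω) ⁻¹'
          {x | c ≤ psum (2^n) (2^n) x} = B t ⁻¹' Set.Ici c := by
      ext ω
      simp only [Set.mem_preimage, Set.mem_setOf_eq, Set.mem_Ici]
      rw [hteltop n ω]
    rw [hset, hPBt _ measurableSet_Ici]
  have hSNIoi : ∀ n (c : ℝ),
      (Measure.pi fun _ : Fin (2^n) => gaussianReal 0 (t/2^n).toNNReal)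
        {x | c < psum (2^n) (2^n) x} = γ (Set.Ioi c) := by
    intro n c
    rw [← htrans n _ (measurableSet_lt measurable_const (measurable_psum _ _))]
    have hset : (fun ω (i : Fin (2^n)) =>
          B ((((i:ℕ)+1 : ℕ):ℝ) * (t/2^n)) ω - B (((i:ℕ):ℝ) * (t/2^n)) ω) ⁻¹'
          {x | c < psum (2^n) (2^n) x} = B t ⁻¹' Set.Ioi c := by
      ext ω
      simp only [Set.mem_preimage, Set.mem_setOf_eq, Set.mem_Ioi]
      rw [hteltop n ω]
    rw [hset, hPBt _ measurableSet_Ioi]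
  -- key: for b > 0, ℙ (R > b) = 2 γ (Ioi b)
  have hRgt : ∀ b : ℝ, 0 < b →
      ℙ {ω | b < R ω} = γ (Set.Ioi b) + γ (Set.Ioi b) := by
    intro b hb
    set D : ℕ → Set Ω := fun n =>
      {ω | ∃ j : ℕ, j ≤ 2^n ∧ b < B t ω - B ((j:ℝ) * (t/2^n)) ω} with hDdef
    have hDmeas : ∀ n, MeasurableSet (D n) := by
      intro n
      have : D n = ⋃ (j : ℕ) (_ : j ≤ 2^n), {ω : Ω | b < B t ω - B ((j:ℝ) * (t/2^n)) ω} := by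
        ext ω
        simp [hDdef]
      rw [this]
      exact MeasurableSet.biUnion (Set.to_countable _)
        fun j _ => measurableSet_lt measurable_const ((hmeas t).sub (hmeas _))
    have hDmono : Monotone D := by
      apply monotone_nat_of_le_succ
      intro n ω hω
      obtain ⟨j, hj, hjval⟩ := hω
      have hpt : (j:ℝ) * (t/2^n) = ((2*j : ℕ):ℝ) * (t/2^(n+1)) := by
        push_cast
        rw [pow_succ]
        field_simp
      have hjle : 2*j ≤ 2^(n+1) := by
        have h2 : 2^(n+1) = 2 * 2^n := by rw [pow_succ]; ring
        omega
      exact ⟨2*j, hjle, by rw [← hpt]; exact hjval⟩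
    have hDunion : {ω | b < R ω} = ⋃ n, D n := by
      ext ω
      simp only [Set.mem_setOf_eq, Set.mem_iUnion]
      constructor
      · intro h
        obtain ⟨n, j, hj, hval⟩ := hdyadic b ω h
        exact ⟨n, j, hj, hval⟩
      · rintro ⟨n, j, hj, hval⟩
        exact (hgt_iff b ω).mpr ⟨_, hpmem n j hj, hval⟩
    have htendD : Tendsto (fun n => ℙ (D n)) atTop (nhds (ℙ {ω | b < R ω})) := by
      rw [hDunion]
      exact tendsto_measure_iUnion_atTop hDmono
    -- identify ℙ (D n) with the discrete maximum event
    have hDn_eq : ∀ n, ℙ (D n) =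
        (Measure.pi fun _ : Fin (2^n) => gaussianReal 0 (t/2^n).toNNReal)
          {x | ∃ j, j ≤ 2^n ∧ b < psum (2^n) j x} := by
      intro n
      have hmA : MeasurableSet {x : Fin (2^n) → ℝ |
          ∃ j, j ≤ 2^n ∧ b < psum (2^n) (2^n) x - psum (2^n) j x} := by
        have : {x : Fin (2^n) → ℝ | ∃ j, j ≤ 2^n ∧ b < psum (2^n) (2^n) x - psum (2^n) j x}
            = ⋃ (j : ℕ) (_ : j ≤ 2^n),
                {x | b < psum (2^n) (2^n) x - psum (2^n) j x} := by
          ext x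
          simp
        rw [this]
        exact MeasurableSet.biUnion (Set.to_countable _)
          fun j _ => measurableSet_lt measurable_const
            ((measurable_psum _ _).sub (measurable_psum _ _))
      have hpre : D n = (fun ω (i : Fin (2^n)) =>
          B ((((i:ℕ)+1 : ℕ):ℝ) * (t/2^n)) ω - B (((i:ℕ):ℝ) * (t/2^n)) ω) ⁻¹'
          {x | ∃ j, j ≤ 2^n ∧ b < psum (2^n) (2^n) x - psum (2^n) j x} := by
        ext ω
        simp only [hDdef, Set.mem_setOf_eq, Set.mem_preimage]
        constructor
        · rintro ⟨j, hj, hval⟩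
          refine ⟨j, hj, ?_⟩
          rw [hteltop n ω, htel n ω j hj]
          exact hval
        · rintro ⟨j, hj, hval⟩
          refine ⟨j, hj, ?_⟩
          rw [hteltop n ω, htel n ω j hj] at hval
          exact hval
      rw [hpre, htrans n _ hmA, discrete_rev b]
    -- upper bound
    have hup : ∀ n, ℙ (D n) ≤ γ (Set.Ioi b) + γ (Set.Ioi b) := by
      intro n
      rw [hDn_eq n]
      calc (Measure.pi fun _ : Fin (2^n) => gaussianReal 0 (t/2^n).toNNReal)
            {x | ∃ j, j ≤ 2^n ∧ b < psum (2^n) j x}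
          ≤ (Measure.pi fun _ : Fin (2^n) => gaussianReal 0 (t/2^n).toNNReal)
            {x | ∃ j, j ≤ 2^n ∧ b ≤ psum (2^n) j x} := by
            refine measure_mono fun x hx => ?_
            obtain ⟨j, hj, hval⟩ := hx
            exact ⟨j, hj, le_of_lt hval⟩
        _ ≤ (Measure.pi fun _ : Fin (2^n) => gaussianReal 0 (t/2^n).toNNReal)
              {x | b ≤ psum (2^n) (2^n) x}
            + (Measure.pi fun _ : Fin (2^n) => gaussianReal 0 (t/2^n).toNNReal)
              {x | b < psum (2^n) (2^n) x} := discrete_upper (gaussianReal_symm _) b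
        _ = γ (Set.Ici b) + γ (Set.Ioi b) := by rw [hSNIci, hSNIoi]
        _ = γ (Set.Ioi b) + γ (Set.Ioi b) := by rw [hIciIoi]
    have hupper : ℙ {ω | b < R ω} ≤ γ (Set.Ioi b) + γ (Set.Ioi b) :=
      le_of_tendsto htendD (Eventually.of_forall hup)
    -- lower bound
    have hlow : ∀ k : ℕ, γ (Set.Ici (b + 1/((k:ℝ)+1)))
        + γ (Set.Ioi (b + 1/((k:ℝ)+1) + 2*(1/((k:ℝ)+1)))) ≤ ℙ {ω | b < R ω} := by
      intro k
      have hkpos : (0:ℝ) < 1/((k:ℝ)+1) := by positivity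
      have hcpos : (0:ℝ) < b + 1/((k:ℝ)+1) := by linarith
      -- the oscillation events
      set Osc : ℕ → Set Ω := fun n => {ω : Ω | ∃ i : Fin (2^n),
          1/((k:ℝ)+1) < |B ((((i:ℕ)+1 : ℕ):ℝ) * (t/2^n)) ω - B (((i:ℕ):ℝ) * (t/2^n)) ω|}
        with hOscdef
      have hOsc_tend : Tendsto (fun n => ℙ (Osc n)) atTop (nhds 0) :=
        osc_tendsto_zero B hcont hmeas htpos hkpos
      have hOsc_eq : ∀ n, ℙ (Osc n) =
          (Measure.pi fun _ : Fin (2^n) => gaussianReal 0 (t/2^n).toNNReal)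
            {x | ∃ i : Fin (2^n), 1/((k:ℝ)+1) < |x i|} := by
        intro n
        have hmO : MeasurableSet {x : Fin (2^n) → ℝ | ∃ i : Fin (2^n), 1/((k:ℝ)+1) < |x i|} := by
          have : {x : Fin (2^n) → ℝ | ∃ i : Fin (2^n), 1/((k:ℝ)+1) < |x i|}
              = ⋃ i : Fin (2^n), {x | 1/((k:ℝ)+1) < |x i|} := by
            ext x
            simp
          rw [this]
          exact MeasurableSet.iUnion fun i =>
            measurableSet_lt measurable_const (measurable_pi_apply i).abs
        have hpre : Osc n = (fun ω (i : Fin (2^n)) =>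
            B ((((i:ℕ)+1 : ℕ):ℝ) * (t/2^n)) ω - B (((i:ℕ):ℝ) * (t/2^n)) ω) ⁻¹'
            {x | ∃ i : Fin (2^n), 1/((k:ℝ)+1) < |x i|} := rfl
        rw [hpre, htrans n _ hmO]
      have hn_ineq : ∀ n, γ (Set.Ici (b + 1/((k:ℝ)+1)))
          + γ (Set.Ioi (b + 1/((k:ℝ)+1) + 2*(1/((k:ℝ)+1)))) ≤ ℙ (D n) + ℙ (Osc n) := by
        intro n
        have hd := discrete_lower (N := 2^n)
          (ν := gaussianReal 0 (t/2^n).toNNReal) (gaussianReal_symm _)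
          hcpos (le_of_lt hkpos)
        rw [hSNIci, hSNIoi] at hd
        rw [hDn_eq n, hOsc_eq n]
        refine le_trans hd (add_le_add (measure_mono ?_) le_rfl)
        intro x hx
        obtain ⟨j, hj, hval⟩ := hx
        exact ⟨j, hj, by linarith⟩
      have hlim : Tendsto (fun n => ℙ (D n) + ℙ (Osc n)) atTop
          (nhds (ℙ {ω | b < R ω} + 0)) := htendD.add hOsc_tend
      rw [add_zero] at hlim
      exact ge_of_tendsto hlim (Eventually.of_forall hn_ineq)
    -- pass to the limit k → ∞
    have hklim1 : Tendsto (fun k : ℕ => γ (Set.Ici (b + 1/((k:ℝ)+1)))) atTop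
        (nhds (γ (Set.Ioi b))) := by
      have hmono : Monotone fun k : ℕ => Set.Ici (b + 1/((k:ℝ)+1)) := by
        intro k l hkl
        apply Set.Ici_subset_Ici.mpr
        have : (1:ℝ)/((l:ℝ)+1) ≤ 1/((k:ℝ)+1) := by
          apply div_le_div_of_nonneg_left one_pos.le (by positivity)
          exact_mod_cast Nat.succ_le_succ hkl
        linarith
      have huni : ⋃ k : ℕ, Set.Ici (b + 1/((k:ℝ)+1)) = Set.Ioi b := by
        ext y
        simp only [Set.mem_iUnion, Set.mem_Ici, Set.mem_Ioi]
        constructor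
        · rintro ⟨k, hk⟩
          have : (0:ℝ) < 1/((k:ℝ)+1) := by positivity
          linarith
        · intro hy
          obtain ⟨k, hk⟩ := exists_nat_one_div_lt (by linarith : (0:ℝ) < y - b)
          exact ⟨k, by linarith⟩
      have := tendsto_measure_iUnion_atTop (μ := γ) hmono
      rwa [huni] at this
    have hklim2 : Tendsto (fun k : ℕ =>
        γ (Set.Ioi (b + 1/((k:ℝ)+1) + 2*(1/((k:ℝ)+1))))) atTop
        (nhds (γ (Set.Ioi b))) := by
      have hmono : Monotone fun k : ℕ => Set.Ioi (b + 1/((k:ℝ)+1) + 2*(1/((k:ℝ)+1))) := by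
        intro k l hkl
        apply Set.Ioi_subset_Ioi
        have : (1:ℝ)/((l:ℝ)+1) ≤ 1/((k:ℝ)+1) := by
          apply div_le_div_of_nonneg_left one_pos.le (by positivity)
          exact_mod_cast Nat.succ_le_succ hkl
        linarith
      have huni : ⋃ k : ℕ, Set.Ioi (b + 1/((k:ℝ)+1) + 2*(1/((k:ℝ)+1))) = Set.Ioi b := by
        ext y
        simp only [Set.mem_iUnion, Set.mem_Ioi]
        constructor
        · rintro ⟨k, hk⟩
          have : (0:ℝ) < 1/((k:ℝ)+1) := by positivity
          linarith
        · intro hy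
          obtain ⟨k, hk⟩ := exists_nat_one_div_lt (by linarith : (0:ℝ) < (y - b)/3)
          refine ⟨k, ?_⟩
          have : (0:ℝ) < 1/((k:ℝ)+1) := by positivity
          nlinarith
      have := tendsto_measure_iUnion_atTop (μ := γ) hmono
      rwa [huni] at this
    have hlower : γ (Set.Ioi b) + γ (Set.Ioi b) ≤ ℙ {ω | b < R ω} :=
      le_of_tendsto (hklim1.add hklim2) (Eventually.of_forall hlow)
    exact le_antisymm hupper hlower
  -- distribution of |B t| beyond a threshold
  have habs : ∀ b : ℝ, 0 ≤ b →
      ℙ {ω | b < |B t ω|} = γ (Set.Ioi b) + γ (Set.Ioi b) := by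
    intro b hb
    have hset : {ω | b < |B t ω|} = B t ⁻¹' (Set.Ioi b ∪ Set.Iio (-b)) := by
      ext ω
      simp only [Set.mem_setOf_eq, Set.mem_preimage, Set.mem_union, Set.mem_Ioi, Set.mem_Iio]
      rw [lt_abs]
      constructor
      · rintro (h | h)
        · exact Or.inl h
        · exact Or.inr (by linarith)
      · rintro (h | h)
        · exact Or.inl h
        · exact Or.inr (by linarith)
    rw [hset, hPBt _ ((measurableSet_Ioi).union measurableSet_Iio)]
    rw [measure_union ?hdisj measurableSet_Iio]
    · rw [hsymγ]
    case hdisj =>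
      apply Set.disjoint_left.mpr
      intro y hy1 hy2
      simp only [Set.mem_Ioi] at hy1
      simp only [Set.mem_Iio] at hy2
      linarith
  -- conclusion: equality of all upper-tail probabilities
  have hkey : ∀ a : ℝ, ℙ ((fun ω => |B t ω|) ⁻¹' Set.Ioi a) = ℙ (R ⁻¹' Set.Ioi a) := by
    intro a
    have h1 : (fun ω => |B t ω|) ⁻¹' Set.Ioi a = {ω | a < |B t ω|} := rfl
    have h2 : R ⁻¹' Set.Ioi a = {ω | a < R ω} := rfl
    rw [h1, h2]
    rcases lt_trichotomy a 0 with hneg | hzero | hpos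
    · have e1 : {ω | a < |B t ω|} = Set.univ := by
        ext ω
        simp only [Set.mem_setOf_eq, Set.mem_univ, iff_true]
        exact lt_of_lt_of_le hneg (abs_nonneg _)
      have e2 : {ω | a < R ω} = Set.univ := by
        ext ω
        simp only [Set.mem_setOf_eq, Set.mem_univ, iff_true]
        exact lt_of_lt_of_le hneg (hRnonneg ω)
      rw [e1, e2]
    · subst hzero
      rw [habs 0 le_rfl]
      -- ℙ (R > 0) via monotone approximation
      have huni : {ω | (0:ℝ) < R ω} = ⋃ k : ℕ, {ω | 1/((k:ℝ)+1) < R ω} := by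
        ext ω
        simp only [Set.mem_setOf_eq, Set.mem_iUnion]
        constructor
        · intro h
          obtain ⟨k, hk⟩ := exists_nat_one_div_lt h
          exact ⟨k, hk⟩
        · rintro ⟨k, hk⟩
          have hp : (0:ℝ) < 1/((k:ℝ)+1) := by positivity
          exact lt_trans hp hk
      have hmono : Monotone fun k : ℕ => {ω | 1/((k:ℝ)+1) < R ω} := by
        intro k l hkl ω hω
        simp only [Set.mem_setOf_eq] at hω ⊢
        have : (1:ℝ)/((l:ℝ)+1) ≤ 1/((k:ℝ)+1) := by
          apply div_le_div_of_nonneg_left one_pos.le (by positivity)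
          exact_mod_cast Nat.succ_le_succ hkl
        linarith
      have htend1 : Tendsto (fun k : ℕ => ℙ {ω | 1/((k:ℝ)+1) < R ω}) atTop
          (nhds (ℙ {ω | (0:ℝ) < R ω})) := by
        rw [huni]
        exact tendsto_measure_iUnion_atTop hmono
      have htend2 : Tendsto (fun k : ℕ => ℙ {ω | 1/((k:ℝ)+1) < R ω}) atTop
          (nhds (γ (Set.Ioi (0:ℝ)) + γ (Set.Ioi (0:ℝ)))) := by
        have heq : ∀ k : ℕ, ℙ {ω | 1/((k:ℝ)+1) < R ω}
            = γ (Set.Ioi (1/((k:ℝ)+1))) + γ (Set.Ioi (1/((k:ℝ)+1))) :=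
          fun k => hRgt _ (by positivity)
        have hmono' : Monotone fun k : ℕ => Set.Ioi ((1:ℝ)/((k:ℝ)+1)) := by
          intro k l hkl
          apply Set.Ioi_subset_Ioi
          apply div_le_div_of_nonneg_left one_pos.le (by positivity)
          exact_mod_cast Nat.succ_le_succ hkl
        have huni' : ⋃ k : ℕ, Set.Ioi ((1:ℝ)/((k:ℝ)+1)) = Set.Ioi (0:ℝ) := by
          ext y
          simp only [Set.mem_iUnion, Set.mem_Ioi]
          constructor
          · rintro ⟨k, hk⟩
            have : (0:ℝ) < 1/((k:ℝ)+1) := by positivity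
            linarith
          · intro hy
            obtain ⟨k, hk⟩ := exists_nat_one_div_lt hy
            exact ⟨k, hk⟩
        have h3 := tendsto_measure_iUnion_atTop (μ := γ) hmono'
        rw [huni'] at h3
        have := h3.add h3
        exact Tendsto.congr (fun k => (heq k).symm) this
      exact (tendsto_nhds_unique htend1 htend2).symm ▸ rfl
    · rw [habs a (le_of_lt hpos), hRgt a hpos]
  -- wrap up via `ext_of_Iic`
  haveI hmap1 : IsProbabilityMeasure (Measure.map (fun ω => |B t ω|) ℙ) :=
    Measure.isProbabilityMeasure_map ((hmeas t).abs.aemeasurable)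
  refine Measure.ext_of_Iic (Measure.map (fun ω => |B t ω|) ℙ)
    (Measure.map R ℙ) fun a => ?_
  rw [Measure.map_apply (hmeas t).abs measurableSet_Iic,
    Measure.map_apply hRmeas measurableSet_Iic]
  have hcompl1 : (fun ω => |B t ω|) ⁻¹' Set.Iic a
      = ((fun ω => |B t ω|) ⁻¹' Set.Ioi a)ᶜ := by
    rw [← Set.preimage_compl, Set.compl_Ioi]
  have hcompl2 : R ⁻¹' Set.Iic a = (R ⁻¹' Set.Ioi a)ᶜ := by
    rw [← Set.preimage_compl, Set.compl_Ioi]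
  rw [hcompl1, hcompl2,
    measure_compl ((hmeas t).abs measurableSet_Ioi) (measure_ne_top _ _),
    measure_compl (hRmeas measurableSet_Ioi) (measure_ne_top _ _), hkey a]
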